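/- arXiv:1810.04057 — 4 statements merged into one kernel-verified Lean document; each statement's English description precedes it below -/
import Mathlib

section
/- For every N ≥ 1 and b' ∈ ℝ, the partition function of the non-interacting monomer-dimer model on the complete graph satisfies Z⁰_N(b') := Σ_{D ∈ 𝒟_N} N^{−|D|} e^{b'(N−2|D|)} = √(N/(2π)) ∫_ℝ (x + e^{b'})^N exp(−N x²/2) dx. -/
open MeasureTheory Real

/-- `D` is a monomer-dimer configuration on `Fin N`: a set of non-loop edges
(pairs of distinct vertices) that are pairwise disjoint, i.e. a partition into
pairs of a subset of the vertex set. -/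
def IsMDConfig (N : ℕ) (D : Finset (Sym2 (Fin N))) : Prop :=
  (∀ e ∈ D, ¬ e.IsDiag) ∧
    ∀ e ∈ D, ∀ f ∈ D, e ≠ f → ∀ v : Fin N, v ∈ e → v ∉ f

open Classical in
lemma card_le_of_config {N : ℕ} {D : Finset (Sym2 (Fin N))} (hD : IsMDConfig N D) :
    D.card ≤ N := by
  have h := Finset.card_le_card_of_injOn (f := fun e : Sym2 (Fin N) => e.out.1)
    (s := D) (t := Finset.univ) (fun e _ => Finset.mem_univ _) ?_
  · simpa using h
  · intro e he e' he' hee'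
    by_contra hne
    refine hD.2 e he e' he' hne e.out.1 (Sym2.out_fst_mem e) ?_
    have h2 : e.out.1 = e'.out.1 := hee'
    rw [h2]
    exact Sym2.out_fst_mem e'

section Count

variable {N m : ℕ}

open Classical

/-- the map from ordered matchings (injections) to configurations -/
noncomputable def toConfig (f : (Fin m × Bool) ↪ Fin N) : Finset (Sym2 (Fin N)) :=
  Finset.image (fun q : Fin m => s(f (q, false), f (q, true))) Finset.univ

lemma toConfig_isConfig (f : (Fin m × Bool) ↪ Fin N) :
    IsMDConfig N (toConfig f) ∧ (toConfig f).card = m := by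
  constructor
  · constructor
    · intro e he
      rw [toConfig, Finset.mem_image] at he
      obtain ⟨q, -, rfl⟩ := he
      rw [Sym2.mk_isDiag_iff]
      intro h
      exact Bool.false_ne_true (congrArg Prod.snd (f.injective h))
    · intro e he e' he' hne v hv hv'
      rw [toConfig, Finset.mem_image] at he he'
      obtain ⟨q, -, rfl⟩ := he
      obtain ⟨q', -, rfl⟩ := he'
      rw [Sym2.mem_iff] at hv hv'
      apply hne
      have hq : q = q' := by
        rcases hv with h1 | h1 <;> rcases hv' with h2 | h2 <;>
          exact congrArg Prod.fst (f.injective (h1.symm.trans h2))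
      rw [hq]
  · rw [toConfig, Finset.card_image_of_injective _ ?_, Finset.card_univ, Fintype.card_fin]
    intro q q' h
    rw [Sym2.eq_iff] at h
    rcases h with ⟨h1, -⟩ | ⟨h1, -⟩ <;> exact congrArg Prod.fst (f.injective h1)

lemma fiber_card {D : Finset (Sym2 (Fin N))} (hD : IsMDConfig N D) (hcard : D.card = m) :
    (Finset.univ.filter (fun f : (Fin m × Bool) ↪ Fin N => toConfig f = D)).card
      = 2 ^ m * m.factorial := by
  classical
  -- enumeration of D
  let g : Fin m ≃ {x // x ∈ D} := (D.equivFin.trans (finCongr hcard)).symm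
  let edge : Fin m → Sym2 (Fin N) := fun q => (g q : Sym2 (Fin N))
  have hedge_mem : ∀ q, edge q ∈ D := fun q => (g q).2
  have hedge_inj : Function.Injective edge := fun q q' h =>
    g.injective (Subtype.ext h)
  let fst : Fin m → Fin N := fun q => (edge q).out.1
  let snd : Fin m → Fin N := fun q => (edge q).out.2
  have hmk : ∀ q, s(fst q, snd q) = edge q := by
    intro q
    show Quot.mk _ ((edge q).out.1, (edge q).out.2) = edge q
    rw [Prod.mk.eta]
    exact Quot.out_eq _
  have hne : ∀ q, fst q ≠ snd q := by
    intro q h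
    apply hD.1 (edge q) (hedge_mem q)
    rw [← hmk q, Sym2.mk_isDiag_iff]
    exact h
  let sel : Fin m → Bool → Fin N := fun q b => cond b (snd q) (fst q)
  have hsel_mem : ∀ q b, sel q b ∈ edge q := by
    intro q b; cases b
    · exact Sym2.out_fst_mem _
    · exact Sym2.out_snd_mem _
  have hsel_inj : ∀ q b q' b', sel q b = sel q' b' → q = q' ∧ b = b' := by
    intro q b q' b' h
    have hq : q = q' := by
      by_contra hqq
      exact hD.2 (edge q) (hedge_mem q) (edge q') (hedge_mem q')
        (fun he => hqq (hedge_inj he)) (sel q b) (hsel_mem q b) (h ▸ hsel_mem q' b')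
    refine ⟨hq, ?_⟩
    subst hq
    cases b <;> cases b' <;> first
      | rfl
      | (exfalso; exact hne q (by simpa [sel] using h))
      | (exfalso; exact hne q (by simpa [sel] using h.symm))
  -- the parametrization
  have hGinj : ∀ (σ : Equiv.Perm (Fin m)) (ε : Fin m → Bool),
      Function.Injective (fun p : Fin m × Bool => sel (σ p.1) (xor p.2 (ε p.1))) := by
    intro σ ε p p' h
    obtain ⟨h1, h2⟩ := hsel_inj _ _ _ _ h
    have hq : p.1 = p'.1 := σ.injective h1
    have hb : p.2 = p'.2 := by
      rw [hq] at h2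
      cases hp : p.2 <;> cases hp' : p'.2 <;> rw [hp, hp'] at h2 <;> simp_all [Bool.xor]
    exact Prod.ext hq hb
  let G : Equiv.Perm (Fin m) × (Fin m → Bool) → {f : (Fin m × Bool) ↪ Fin N // toConfig f = D} :=
    fun p => ⟨⟨fun q => sel (p.1 q.1) (xor q.2 (p.2 q.1)), hGinj p.1 p.2⟩, by
      ext e
      rw [toConfig, Finset.mem_image]
      have hself : ∀ (q : Fin m) (c : Bool), s(sel q c, sel q (!c)) = edge q := by
        intro q c
        cases c
        · exact hmk q
        · rw [Sym2.eq_swap]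
          exact hmk q
      constructor
      · rintro ⟨q, -, rfl⟩
        rw [Function.Embedding.coeFn_mk]
        have h5 : s(sel (p.1 q) (xor false (p.2 q)), sel (p.1 q) (xor true (p.2 q)))
            = edge (p.1 q) := by
          rw [Bool.false_xor, Bool.true_xor]
          exact hself _ _
        rw [h5]
        exact hedge_mem _
      · intro he
        refine ⟨p.1.symm (g.symm ⟨e, he⟩), Finset.mem_univ _, ?_⟩
        rw [Function.Embedding.coeFn_mk]
        have h5 : s(sel (p.1 (p.1.symm (g.symm ⟨e, he⟩))) (xor false (p.2 (p.1.symm (g.symm ⟨e, he⟩)))),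
            sel (p.1 (p.1.symm (g.symm ⟨e, he⟩))) (xor true (p.2 (p.1.symm (g.symm ⟨e, he⟩))))) = e := by
          rw [Bool.false_xor, Bool.true_xor, hself, Equiv.apply_symm_apply]
          show ((g (g.symm ⟨e, he⟩) : {x // x ∈ D}) : Sym2 (Fin N)) = e
          rw [Equiv.apply_symm_apply]
        exact h5⟩
  have hGbij : Function.Bijective G := by
    constructor
    · intro p p' h
      have hfun : ∀ q b, sel (p.1 q) (xor b (p.2 q)) = sel (p'.1 q) (xor b (p'.2 q)) := by
        intro q b
        have := congrArg (fun x => (x.1 : (Fin m × Bool) ↪ Fin N) (q, b)) h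
        simpa [G] using this
      have hσ : p.1 = p'.1 := by
        apply Equiv.ext
        intro q
        exact (hsel_inj _ _ _ _ (hfun q false)).1
      have hε : p.2 = p'.2 := by
        funext q
        have h2 := (hsel_inj _ _ _ _ (hfun q false)).2
        cases hc : p.2 q <;> cases hc' : p'.2 q <;> rw [hc, hc'] at h2 <;> simp_all
      exact Prod.ext hσ hε
    · rintro ⟨f, hf⟩
      have hedgef_mem : ∀ q : Fin m, s(f (q, false), f (q, true)) ∈ D := by
        intro q
        rw [← hf, toConfig, Finset.mem_image]
        exact ⟨q, Finset.mem_univ _, rfl⟩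
      let σ0 : Fin m → Fin m := fun q => g.symm ⟨s(f (q, false), f (q, true)), hedgef_mem q⟩
      have hedgeσ0 : ∀ q, edge (σ0 q) = s(f (q, false), f (q, true)) := by
        intro q
        show ((g (g.symm ⟨_, hedgef_mem q⟩) : {x // x ∈ D}) : Sym2 (Fin N)) = _
        rw [Equiv.apply_symm_apply]
      have hσ0inj : Function.Injective σ0 := by
        intro q q' h
        have h2 : s(f (q, false), f (q, true)) = s(f (q', false), f (q', true)) := by
          rw [← hedgeσ0 q, ← hedgeσ0 q', h]
        rw [Sym2.eq_iff] at h2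
        rcases h2 with ⟨h3, -⟩ | ⟨h3, -⟩
        · exact congrArg Prod.fst (f.injective h3)
        · exact absurd (congrArg Prod.snd (f.injective h3)) (by simp)
      let σ : Equiv.Perm (Fin m) := Equiv.ofBijective σ0 (Finite.injective_iff_bijective.mp hσ0inj)
      let ε : Fin m → Bool := fun q => if f (q, false) = fst (σ0 q) then false else true
      refine ⟨(σ, ε), ?_⟩
      apply Subtype.ext
      apply DFunLike.ext
      rintro ⟨q, b⟩
      show sel (σ0 q) (xor b (ε q)) = f (q, b)
      have hkey : s(fst (σ0 q), snd (σ0 q)) = s(f (q, false), f (q, true)) := by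
        rw [hmk, hedgeσ0]
      rw [Sym2.eq_iff] at hkey
      rcases hkey with ⟨h1, h2⟩ | ⟨h1, h2⟩
      · have hε : ε q = false := by simp [ε, h1.symm]
        cases b
        · rw [hε]
          show fst (σ0 q) = f (q, false)
          exact h1
        · rw [hε]
          show snd (σ0 q) = f (q, true)
          exact h2
      · have hfne : ¬ (f (q, false) = fst (σ0 q)) := by
          rw [h1]
          intro hcontra
          exact absurd (congrArg Prod.snd (f.injective hcontra)) (by simp)
        have hε : ε q = true := by simp [ε, hfne]
        cases b
        · rw [hε]
          show snd (σ0 q) = f (q, false)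
          exact h2
        · rw [hε]
          show fst (σ0 q) = f (q, true)
          exact h1
  -- conclude via cardinalities
  have hcards := Fintype.card_of_bijective hGbij
  rw [Fintype.card_prod, Fintype.card_perm, Fintype.card_fin] at hcards
  have hfun2 : Fintype.card (Fin m → Bool) = 2 ^ m := by
    simp [Fintype.card_fun]
  rw [hfun2] at hcards
  have hsub : Fintype.card {f : (Fin m × Bool) ↪ Fin N // toConfig f = D}
      = (Finset.univ.filter (fun f : (Fin m × Bool) ↪ Fin N => toConfig f = D)).card := by
    rw [Fintype.card_subtype]
  rw [hsub] at hcards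
  rw [← hcards]
  ring

open Classical in
lemma count_configs (N m : ℕ) :
    ((Finset.univ.filter
        (fun D : Finset (Sym2 (Fin N)) => IsMDConfig N D ∧ D.card = m)).card)
      * (2 ^ m * m.factorial) = N.descFactorial (2 * m) := by
  classical
  have hmain : (Finset.univ : Finset ((Fin m × Bool) ↪ Fin N)).card
      = ∑ D ∈ Finset.univ.filter
          (fun D : Finset (Sym2 (Fin N)) => IsMDConfig N D ∧ D.card = m),
        (Finset.univ.filter (fun f : (Fin m × Bool) ↪ Fin N => toConfig f = D)).card := by
    apply Finset.card_eq_sum_card_fiberwise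
    intro f _
    rw [Finset.mem_coe, Finset.mem_filter]
    exact ⟨Finset.mem_univ _, toConfig_isConfig f⟩
  have hcardU : (Finset.univ : Finset ((Fin m × Bool) ↪ Fin N)).card
      = N.descFactorial (2 * m) := by
    rw [Finset.card_univ, Fintype.card_embedding_eq]
    congr 1 <;> simp [Fintype.card_prod, Fintype.card_fin, Fintype.card_bool, two_mul, mul_comm]
  rw [hcardU] at hmain
  rw [hmain]
  rw [Finset.sum_congr rfl (fun D hD => ?_), Finset.sum_const, smul_eq_mul]
  rw [Finset.mem_filter] at hD
  exact fiber_card hD.2.1 hD.2.2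

end Count


lemma integrable_pow_gauss {b : ℝ} (hb : 0 < b) (k : ℕ) :
    Integrable (fun x : ℝ => x ^ k * Real.exp (-(b * x ^ 2 / 2))) := by
  have h := integrable_rpow_mul_exp_neg_mul_sq (show (0:ℝ) < b/2 by linarith)
    (s := (k:ℝ)) (lt_of_lt_of_le (by norm_num) (Nat.cast_nonneg k))
  simp_rw [Real.rpow_natCast] at h
  convert h using 3 with x
  ring_nf

lemma gauss_moment_rec {b : ℝ} (hb : 0 < b) (k : ℕ) :
    ∫ x : ℝ, x ^ (k+2) * Real.exp (-(b * x ^ 2 / 2)) =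
      ((k+1 : ℝ)/b) * ∫ x : ℝ, x ^ k * Real.exp (-(b * x ^ 2 / 2)) := by
  have hu : ∀ x : ℝ, HasDerivAt (fun x : ℝ => x ^ (k+1)) ((k+1 : ℝ) * x ^ k) x := by
    intro x
    simpa using (hasDerivAt_pow (k+1) x)
  have hv : ∀ x : ℝ, HasDerivAt (fun x : ℝ => -(1/b) * Real.exp (-(b * x ^ 2 / 2)))
      (x * Real.exp (-(b * x ^ 2 / 2))) x := by
    intro x
    have h1 : HasDerivAt (fun x : ℝ => -(b * x ^ 2 / 2)) (-(b*x)) x := by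
      have := ((hasDerivAt_pow 2 x).const_mul b).div_const 2
      exact this.neg.congr_deriv (by ring)
    have := (h1.exp).const_mul (-(1/b))
    refine this.congr_deriv ?_
    field_simp
  have key := integral_mul_deriv_eq_deriv_mul_of_integrable (fun x _ => hu x) (fun x _ => hv x) ?_ ?_ ?_
  · calc ∫ x : ℝ, x ^ (k+2) * Real.exp (-(b * x ^ 2 / 2))
        = ∫ x : ℝ, x ^ (k+1) * (x * Real.exp (-(b * x ^ 2 / 2))) := by
          congr 1; ext x; ring
      _ = - ∫ x : ℝ, ((k+1 : ℝ) * x ^ k) * (-(1/b) * Real.exp (-(b * x ^ 2 / 2))) := key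
      _ = ((k+1 : ℝ)/b) * ∫ x : ℝ, x ^ k * Real.exp (-(b * x ^ 2 / 2)) := by
          rw [← integral_neg, ← integral_const_mul]
          congr 1; ext x; field_simp
  · exact (integrable_pow_gauss hb (k+2)).congr
      (Filter.Eventually.of_forall fun x => by simp [Pi.mul_apply]; ring)
  · exact (((integrable_pow_gauss hb k).const_mul (-(1/b) * (k+1))).congr
      (Filter.Eventually.of_forall fun x => by simp [Pi.mul_apply]; ring))
  · exact (((integrable_pow_gauss hb (k+1)).const_mul (-(1/b))).congr
      (Filter.Eventually.of_forall fun x => by simp [Pi.mul_apply]; ring))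

lemma gauss_moment_even {b : ℝ} (hb : 0 < b) (m : ℕ) :
    ∫ x : ℝ, x ^ (2*m) * Real.exp (-(b * x ^ 2 / 2)) =
      Real.sqrt (2*Real.pi/b) * ((2*m).factorial / (2^m * m.factorial * b^m)) := by
  induction m with
  | zero =>
      simpa using (by
        have h := integral_gaussian (b/2)
        have : ∀ x : ℝ, Real.exp (-(b/2) * x ^ 2) = Real.exp (-(b * x ^ 2 / 2)) := by
          intro x; ring_nf
        rw [show Real.pi / (b/2) = 2*Real.pi/b by field_simp] at h
        calc ∫ x : ℝ, Real.exp (-(b * x ^ 2 / 2)) = ∫ x : ℝ, Real.exp (-(b/2) * x ^ 2) := by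
              congr 1; ext x; rw [this]
          _ = Real.sqrt (2*Real.pi/b) := h)
  | succ m ih =>
      have h2 : 2*(m+1) = (2*m) + 2 := by ring
      rw [h2, gauss_moment_rec hb (2*m), ih]
      have hb' : (b:ℝ) ≠ 0 := ne_of_gt hb
      have hf1 : ((2*m+2).factorial : ℝ) = (2*m+2) * (2*m+1) * (2*m).factorial := by
        have h3 : 2*m+2 = (2*m+1) + 1 := by ring
        rw [h3, Nat.factorial_succ, Nat.factorial_succ]
        push_cast; ring
      rw [hf1]
      have hm : (m.factorial : ℝ) ≠ 0 := Nat.cast_ne_zero.mpr m.factorial_ne_zero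
      rw [Nat.factorial_succ]
      push_cast
      field_simp
      ring

lemma gauss_moment_odd {b : ℝ} (hb : 0 < b) (m : ℕ) :
    ∫ x : ℝ, x ^ (2*m+1) * Real.exp (-(b * x ^ 2 / 2)) = 0 := by
  have h := MeasureTheory.integral_neg_eq_self (μ := volume) (fun x : ℝ => x ^ (2*m+1) * Real.exp (-(b * x ^ 2 / 2)))
  have h2 : ∀ x : ℝ, (-x) ^ (2*m+1) * Real.exp (-(b * (-x) ^ 2 / 2))
      = -(x ^ (2*m+1) * Real.exp (-(b * x ^ 2 / 2))) := by
    intro x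
    rw [Odd.neg_pow ⟨m, by ring⟩, neg_sq]
    ring
  simp_rw [h2, integral_neg] at h
  linarith

lemma sum_range_two_mul {M : Type*} [AddCommMonoid M] (f : ℕ → M) (n : ℕ) :
    ∑ i ∈ Finset.range (2*n), f i = ∑ m ∈ Finset.range n, (f (2*m) + f (2*m+1)) := by
  induction n with
  | zero => simp
  | succ n ih =>
      rw [show 2*(n+1) = (2*n+1)+1 by ring, Finset.sum_range_succ, Finset.sum_range_succ,
        ih, Finset.sum_range_succ]
      abel

lemma rhs_eq (N : ℕ) (hN : 1 ≤ N) (b' : ℝ) :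
    Real.sqrt (N / (2 * Real.pi)) *
        ∫ x : ℝ, (x + Real.exp b') ^ N * Real.exp (-(N * x ^ 2 / 2)) =
      ∑ m ∈ Finset.range (N+1),
        (N.descFactorial (2*m) : ℝ) / (2^m * m.factorial) * ((N:ℝ)^m)⁻¹
          * Real.exp (b' * ((N:ℝ) - 2*m)) := by
  have hNpos : (0:ℝ) < N := by exact_mod_cast hN
  have hint : ∀ k : ℕ, Integrable (fun x : ℝ =>
      x ^ k * Real.exp b' ^ (N - k) * (N.choose k : ℝ) * Real.exp (-((N:ℝ) * x ^ 2 / 2))) := by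
    intro k
    have := ((integrable_pow_gauss hNpos k).mul_const
      (Real.exp b' ^ (N - k) * (N.choose k : ℝ)))
    exact this.congr (Filter.Eventually.of_forall fun x => by ring)
  have hexpand : ∫ x : ℝ, (x + Real.exp b') ^ N * Real.exp (-((N:ℝ) * x ^ 2 / 2)) =
      ∑ k ∈ Finset.range (N+1), ∫ x : ℝ,
        x ^ k * Real.exp b' ^ (N - k) * (N.choose k : ℝ) * Real.exp (-((N:ℝ) * x ^ 2 / 2)) := by
    rw [← integral_finset_sum _ (fun k _ => hint k)]
    congr 1; ext x
    rw [add_pow, Finset.sum_mul]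
  rw [hexpand, Finset.mul_sum]
  -- introduce g
  set g : ℕ → ℝ := fun k => Real.sqrt ((N:ℝ) / (2 * Real.pi)) * ∫ x : ℝ,
        x ^ k * Real.exp b' ^ (N - k) * (N.choose k : ℝ) * Real.exp (-((N:ℝ) * x ^ 2 / 2))
    with hg
  show ∑ k ∈ Finset.range (N+1), g k = _
  have hzero : ∀ k, N < k → g k = 0 := by
    intro k hk
    simp [hg, Nat.choose_eq_zero_of_lt hk]
  have hext : ∑ k ∈ Finset.range (N+1), g k = ∑ k ∈ Finset.range (2*(N+1)), g k := by
    refine Finset.sum_subset ?_ ?_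
    · intro k hk
      rw [Finset.mem_range] at hk
      rw [Finset.mem_range]
      omega
    · intro k _ hk
      simp only [Finset.mem_range, not_lt] at hk
      exact hzero k (by omega)
  rw [hext, sum_range_two_mul]
  refine Finset.sum_congr rfl ?_
  intro m _
  have hodd : g (2*m+1) = 0 := by
    have h0 : (∫ x : ℝ, x ^ (2*m+1) * Real.exp b' ^ (N - (2*m+1)) * (N.choose (2*m+1) : ℝ)
        * Real.exp (-((N:ℝ) * x ^ 2 / 2))) = 0 := by
      have := gauss_moment_odd hNpos m
      have h1 := integral_mul_const (μ := volume) (Real.exp b' ^ (N - (2*m+1)) * (N.choose (2*m+1) : ℝ))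
        (fun x : ℝ => x ^ (2*m+1) * Real.exp (-((N:ℝ) * x ^ 2 / 2)))
      calc (∫ x : ℝ, x ^ (2*m+1) * Real.exp b' ^ (N - (2*m+1)) * (N.choose (2*m+1) : ℝ)
            * Real.exp (-((N:ℝ) * x ^ 2 / 2)))
          = ∫ x : ℝ, (x ^ (2*m+1) * Real.exp (-((N:ℝ) * x ^ 2 / 2)))
              * (Real.exp b' ^ (N - (2*m+1)) * (N.choose (2*m+1) : ℝ)) := by
            congr 1; ext x; ring
        _ = 0 := by rw [h1, this, zero_mul]
    rw [hg]; simp only [h0, mul_zero]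
  rw [hodd, add_zero, hg]
  beta_reduce
  have heven : (∫ x : ℝ, x ^ (2*m) * Real.exp b' ^ (N - (2*m)) * (N.choose (2*m) : ℝ)
        * Real.exp (-((N:ℝ) * x ^ 2 / 2)))
      = (Real.sqrt (2*Real.pi/(N:ℝ)) * ((2*m).factorial / (2^m * m.factorial * (N:ℝ)^m)))
          * (Real.exp b' ^ (N - (2*m)) * (N.choose (2*m) : ℝ)) := by
    rw [← gauss_moment_even hNpos m]
    rw [← integral_mul_const]
    congr 1; ext x; ring
  rw [heven]
  have hsqrt : Real.sqrt ((N:ℝ) / (2 * Real.pi)) * Real.sqrt (2*Real.pi/(N:ℝ)) = 1 := by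
    rw [← Real.sqrt_mul (by positivity)]
    rw [show (N:ℝ) / (2 * Real.pi) * (2*Real.pi/(N:ℝ)) = 1 by
      field_simp]
    exact Real.sqrt_one
  rw [show Real.sqrt ((N:ℝ) / (2 * Real.pi)) * ((Real.sqrt (2*Real.pi/(N:ℝ))
        * (((2*m).factorial : ℝ) / (2^m * m.factorial * (N:ℝ)^m)))
          * (Real.exp b' ^ (N - (2*m)) * (N.choose (2*m) : ℝ)))
      = (Real.sqrt ((N:ℝ) / (2 * Real.pi)) * Real.sqrt (2*Real.pi/(N:ℝ)))
        * (((2*m).factorial : ℝ) / (2^m * m.factorial * (N:ℝ)^m))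
          * (Real.exp b' ^ (N - (2*m)) * (N.choose (2*m) : ℝ)) by ring, hsqrt, one_mul]
  by_cases hm : 2*m ≤ N
  · have hcast : ((N - 2*m : ℕ) : ℝ) = (N:ℝ) - 2*m := by
      push_cast [Nat.cast_sub hm]; ring
    have hexp : Real.exp b' ^ (N - 2*m) = Real.exp (b' * ((N:ℝ) - 2*m)) := by
      rw [← Real.exp_nat_mul, ← hcast]; ring_nf
    rw [hexp]
    have hdf : (N.descFactorial (2*m) : ℝ) = ((2*m).factorial : ℝ) * (N.choose (2*m) : ℝ) := by
      rw [← Nat.cast_mul, Nat.descFactorial_eq_factorial_mul_choose]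
    rw [hdf]
    have h2 : ((2:ℝ)^m * m.factorial) ≠ 0 := by positivity
    field_simp
  · rw [Nat.choose_eq_zero_of_lt (by omega), Nat.descFactorial_eq_zero_iff_lt.2 (by omega)]
    simp

open Classical in
/-- Integral representation of the non-interacting monomer-dimer partition
function on the complete graph of size `N`. -/
theorem nonInteracting_partition_integral (N : ℕ) (hN : 1 ≤ N) (b' : ℝ) :
    (∑ D ∈ Finset.univ.filter (IsMDConfig N),
        ((N : ℝ) ^ D.card)⁻¹ * Real.exp (b' * (N - 2 * D.card))) =
      Real.sqrt (N / (2 * Real.pi)) *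
        ∫ x : ℝ, (x + Real.exp b') ^ N * Real.exp (-(N * x ^ 2 / 2)) := by
  rw [rhs_eq N hN b']
  have hmaps : ∀ D ∈ Finset.univ.filter (IsMDConfig N), D.card ∈ Finset.range (N+1) := by
    intro D hDm
    rw [Finset.mem_range]
    rw [Finset.mem_filter] at hDm
    exact Nat.lt_succ_of_le (card_le_of_config hDm.2)
  rw [← Finset.sum_fiberwise_of_maps_to hmaps
    (fun D => ((N : ℝ) ^ D.card)⁻¹ * Real.exp (b' * ((N:ℝ) - 2 * D.card)))]
  refine Finset.sum_congr rfl ?_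
  intro m _
  have hinner : ∀ D ∈ (Finset.univ.filter (IsMDConfig N)).filter (fun D => D.card = m),
      ((N : ℝ) ^ D.card)⁻¹ * Real.exp (b' * ((N:ℝ) - 2 * D.card))
        = ((N : ℝ) ^ m)⁻¹ * Real.exp (b' * ((N:ℝ) - 2 * m)) := by
    intro D hDm
    rw [Finset.mem_filter] at hDm
    rw [hDm.2]
  rw [Finset.sum_congr rfl hinner, Finset.sum_const, nsmul_eq_mul]
  have hfilter : (Finset.univ.filter (IsMDConfig N)).filter (fun D => D.card = m)
      = Finset.univ.filter
          (fun D : Finset (Sym2 (Fin N)) => IsMDConfig N D ∧ D.card = m) := by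
    rw [Finset.filter_filter]
  rw [hfilter]
  have hcount := count_configs N m
  have h2 : ((2:ℝ)^m * m.factorial) ≠ 0 := by positivity
  have hcast : ((Finset.univ.filter
        (fun D : Finset (Sym2 (Fin N)) => IsMDConfig N D ∧ D.card = m)).card : ℝ)
      = (N.descFactorial (2*m) : ℝ) / (2^m * m.factorial) := by
    rw [eq_div_iff h2]
    exact_mod_cast congrArg (Nat.cast : ℕ → ℝ) hcount
  rw [hcast]
  ring
end

section
/- Let a > 0 and b ∈ ℝ. If 0 < a ≤ (3 + 2√2)/2, then the self-consistent equation e^{ay+b} = y/√(1−y) has exactly one solution y ∈ (0,1). -/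
open Real

/-- For `0 < a ≤ (3+2√2)/2` the self-consistent equation
`e^{ay+b} = y/√(1-y)` has exactly one solution `y ∈ (0,1)`. -/
theorem selfconsistent_unique_solution (a b : ℝ) (ha : 0 < a)
    (hac : a ≤ (3 + 2 * Real.sqrt 2) / 2) :
    ∃! y : ℝ, y ∈ Set.Ioo (0 : ℝ) 1 ∧
      Real.exp (a * y + b) = y / Real.sqrt (1 - y) := by
  set s := Real.sqrt 2 with hs_def
  have hs2 : s ^ 2 = 2 := Real.sq_sqrt (by norm_num)
  have hs1 : 1 < s := by
    rw [hs_def]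
    nlinarith [Real.sq_sqrt (show (0:ℝ) ≤ 2 by norm_num),
      Real.sqrt_nonneg 2]
  set g : ℝ → ℝ := fun y => Real.log y - (1/2) * Real.log (1 - y) - a * y - b with hg
  -- derivative of g
  have hderiv : ∀ y ∈ Set.Ioo (0:ℝ) 1, HasDerivAt g (1/y + 1/(2*(1-y)) - a) y := by
    rintro y ⟨hy0, hy1⟩
    have h1y : 0 < 1 - y := by linarith
    have h1 : HasDerivAt Real.log y⁻¹ y := Real.hasDerivAt_log (ne_of_gt hy0)
    have h2 : HasDerivAt (fun t : ℝ => 1 - t) (-1) y := by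
      exact (hasDerivAt_id y).const_sub 1
    have h3 : HasDerivAt (fun t : ℝ => Real.log (1 - t)) ((1 - y)⁻¹ * (-1)) y :=
      (Real.hasDerivAt_log (ne_of_gt h1y)).comp y h2
    have h4 : HasDerivAt (fun t : ℝ => a * t + b) a y := by
      simpa using ((hasDerivAt_id y).const_mul a).add_const b
    have := (h1.sub (h3.const_mul (1/2))).sub h4
    convert this using 1
    · rfl
    · rfl
    · funext t; simp only [hg, Pi.sub_apply]; ring
    · field_simp; ring
  have hcont : ∀ y ∈ Set.Ioo (0:ℝ) 1, ContinuousAt g y := fun y hy =>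
    (hderiv y hy).differentiableAt.continuousAt
  -- positivity of the derivative away from the critical point
  have hpos : ∀ y ∈ Set.Ioo (0:ℝ) 1, y ≠ 2 - s → 0 < 1/y + 1/(2*(1-y)) - a := by
    rintro y ⟨hy0, hy1⟩ hne
    have h1y : 0 < 1 - y := by linarith
    have hq : 0 < (y - (2 - s))^2 := by
      have h := sub_ne_zero.mpr hne
      exact lt_of_le_of_ne (sq_nonneg _) (Ne.symm (pow_ne_zero 2 h))
    have h2 : (3 + 2*s) * (y * (1 - y)) < 2 - y := by nlinarith [hq, hs2]
    have heq : 1/y + 1/(2*(1-y)) = (2 - y)/(2*y*(1-y)) := by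
      field_simp; ring
    have h3 : (3 + 2*s)/2 < 1/y + 1/(2*(1-y)) := by
      rw [heq, lt_div_iff₀ (by positivity)]
      nlinarith [h2]
    linarith
  -- strict monotonicity of g on (0,1)
  have key : ∀ x y : ℝ, x ∈ Set.Ioo (0:ℝ) 1 → y ∈ Set.Ioo (0:ℝ) 1 → x < y →
      (∀ z ∈ Set.Ioo x y, z ≠ 2 - s) → g x < g y := by
    intro x y hx hy hxy hz
    have hsub : Set.Icc x y ⊆ Set.Ioo (0:ℝ) 1 := fun z hzm =>
      ⟨lt_of_lt_of_le hx.1 hzm.1, lt_of_le_of_lt hzm.2 hy.2⟩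
    have hsm : StrictMonoOn g (Set.Icc x y) := by
      apply strictMonoOn_of_deriv_pos (convex_Icc x y)
        (fun z hzm => (hcont z (hsub hzm)).continuousWithinAt)
      intro z hzm
      rw [interior_Icc] at hzm
      have hz01 : z ∈ Set.Ioo (0:ℝ) 1 := hsub ⟨le_of_lt hzm.1, le_of_lt hzm.2⟩
      rw [(hderiv z hz01).deriv]
      exact hpos z hz01 (hz z hzm)
    exact hsm (Set.left_mem_Icc.mpr (le_of_lt hxy)) (Set.right_mem_Icc.mpr (le_of_lt hxy)) hxy
  have hmono : ∀ x ∈ Set.Ioo (0:ℝ) 1, ∀ y ∈ Set.Ioo (0:ℝ) 1, x < y → g x < g y := by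
    intro x hx y hy hxy
    by_cases h : (2 - s) ∈ Set.Ioo x y
    · have hm : (2 - s) ∈ Set.Ioo (0:ℝ) 1 :=
        ⟨lt_trans hx.1 h.1, lt_trans h.2 hy.2⟩
      have h1 : g x < g (2 - s) :=
        key x (2 - s) hx hm h.1 (fun z hzm => ne_of_lt hzm.2)
      have h2 : g (2 - s) < g y :=
        key (2 - s) y hm hy h.2 (fun z hzm => (ne_of_gt hzm.1))
      linarith
    · exact key x y hx hy hxy (fun z hzm hc => h (hc ▸ hzm))
  -- endpoints for the intermediate value theorem
  set y₁ : ℝ := Real.exp (-(Real.log 2 + |b| + 1)) with hy₁def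
  set y₂ : ℝ := 1 - Real.exp (-(2*(Real.log 2 + a + |b| + 1))) with hy₂def
  have hlog2 : (0:ℝ) < Real.log 2 := Real.log_pos (by norm_num)
  have hexp_half : Real.exp (-Real.log 2) = 1/2 := by
    rw [Real.exp_neg, Real.exp_log (by norm_num : (0:ℝ) < 2)]; norm_num
  have hy₁half : y₁ < 1/2 := by
    rw [hy₁def, ← hexp_half]
    apply Real.exp_lt_exp.mpr
    have : 0 ≤ |b| := abs_nonneg b
    linarith
  have hy₁pos : 0 < y₁ := Real.exp_pos _
  have hy₂half : 1/2 < y₂ := by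
    rw [hy₂def]
    have : Real.exp (-(2*(Real.log 2 + a + |b| + 1))) < 1/2 := by
      rw [← hexp_half]
      apply Real.exp_lt_exp.mpr
      have : 0 ≤ |b| := abs_nonneg b
      linarith
    linarith
  have hy₂lt : y₂ < 1 := by
    rw [hy₂def]
    have := Real.exp_pos (-(2*(Real.log 2 + a + |b| + 1)))
    linarith
  have hy₁mem : y₁ ∈ Set.Ioo (0:ℝ) 1 := ⟨hy₁pos, by linarith⟩
  have hy₂mem : y₂ ∈ Set.Ioo (0:ℝ) 1 := ⟨by linarith, hy₂lt⟩
  have hy₁y₂ : y₁ < y₂ := by linarith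
  -- g y₁ < 0
  have hgneg : g y₁ < 0 := by
    have hly₁ : Real.log y₁ = -(Real.log 2 + |b| + 1) := Real.log_exp _
    have h1 : Real.log (1 - y₁) ≥ Real.log (1/2) := by
      apply Real.log_le_log (by norm_num)
      linarith
    have h12 : Real.log (1/2) = -Real.log 2 := by
      rw [one_div, Real.log_inv]
    have hb : -b ≤ |b| := neg_le_abs b
    have hay : 0 < a * y₁ := mul_pos ha hy₁pos
    simp only [hg]
    rw [hly₁]
    nlinarith [h1, h12]
  -- g y₂ > 0
  have hgpos : 0 < g y₂ := by
    have hl2 : Real.log (1 - y₂) = -(2*(Real.log 2 + a + |b| + 1)) := by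
      rw [hy₂def]; simp [Real.log_exp]
    have h1 : Real.log y₂ ≥ Real.log (1/2) := by
      apply Real.log_le_log (by norm_num)
      linarith
    have h12 : Real.log (1/2) = -Real.log 2 := by
      rw [one_div, Real.log_inv]
    have hb : b ≤ |b| := le_abs_self b
    have hay : a * y₂ ≤ a := by nlinarith
    simp only [hg]
    rw [hl2]
    nlinarith [h1, h12]
  -- existence of a root of g by IVT
  have hcontOn : ContinuousOn g (Set.Icc y₁ y₂) := by
    intro z hzm
    exact (hcont z ⟨lt_of_lt_of_le hy₁pos hzm.1, lt_of_le_of_lt hzm.2 hy₂lt⟩).continuousWithinAt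
  obtain ⟨c, hcmem, hgc⟩ :=
    intermediate_value_Icc (le_of_lt hy₁y₂) hcontOn ⟨le_of_lt hgneg, le_of_lt hgpos⟩
  have hcIoo : c ∈ Set.Ioo (0:ℝ) 1 :=
    ⟨lt_of_lt_of_le hy₁pos hcmem.1, lt_of_le_of_lt hcmem.2 hy₂lt⟩
  -- equivalence between the equation and g = 0
  have hiff : ∀ y ∈ Set.Ioo (0:ℝ) 1,
      (Real.exp (a * y + b) = y / Real.sqrt (1 - y)) ↔ g y = 0 := by
    rintro y ⟨hy0, hy1⟩
    have h1y : 0 < 1 - y := by linarith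
    have hsq : 0 < Real.sqrt (1 - y) := Real.sqrt_pos.mpr h1y
    have hlog : Real.log (y / Real.sqrt (1-y)) = Real.log y - (1/2) * Real.log (1-y) := by
      rw [Real.log_div (ne_of_gt hy0) (ne_of_gt hsq), Real.log_sqrt (le_of_lt h1y)]
      ring
    constructor
    · intro h
      have h' := congrArg Real.log h
      rw [Real.log_exp, hlog] at h'
      simp only [hg]
      linarith
    · intro h
      have h' : a * y + b = Real.log (y / Real.sqrt (1-y)) := by
        rw [hlog]
        simp only [hg] at h
        linarith
      rw [h', Real.exp_log (div_pos hy0 hsq)]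
  refine ⟨c, ⟨hcIoo, (hiff c hcIoo).mpr hgc⟩, ?_⟩
  rintro z ⟨hzmem, hzeq⟩
  have hgz : g z = 0 := (hiff z hzmem).mp hzeq
  rcases lt_trichotomy z c with h | h | h
  · have := hmono z hzmem c hcIoo h
    rw [hgz, hgc] at this
    exact absurd this (lt_irrefl 0)
  · exact h
  · have := hmono c hcIoo z hzmem h
    rw [hgz, hgc] at this
    exact absurd this (lt_irrefl 0)
end

section
/- Let a > (3 + 2√2)/2 and define y_± = (2a + 1 ± √(4a² − 12a + 1))/(4a). Then 0 < y₋ < y₊ < 1, and for any b ∈ ℝ the equation e^{ay+b} = y/√(1−y) has at most one solution in each of the three intervals (0, y₋), (y₋, y₊), (y₊, 1); in particular it has at most three solutions in (0,1). -/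
open Real Set

private noncomputable def Fsc (a b : ℝ) : ℝ → ℝ :=
  fun y => a * y + b - Real.log y + Real.log (1 - y) / 2

private lemma hasDerivFsc (a b y : ℝ) (h0 : 0 < y) (h1 : y < 1) :
    HasDerivAt (Fsc a b) (a - 1/y - 1/(2*(1-y))) y := by
  have hy : y ≠ 0 := ne_of_gt h0
  have h1y : (1:ℝ) - y ≠ 0 := by intro h; nlinarith
  have d1 : HasDerivAt (fun y : ℝ => a * y + b) a y := by
    simpa using ((hasDerivAt_id y).const_mul a).add_const b
  have d2 : HasDerivAt Real.log y⁻¹ y := Real.hasDerivAt_log hy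
  have d3 : HasDerivAt (fun y : ℝ => 1 - y) (-1) y := by
    simpa using (hasDerivAt_id y).const_sub 1
  have d4 : HasDerivAt (fun y : ℝ => Real.log (1 - y)) ((1-y)⁻¹ * (-1)) y :=
    (Real.hasDerivAt_log h1y).comp y d3
  have := (d1.sub d2).add (d4.div_const 2)
  refine HasDerivAt.congr_deriv (f := Fsc a b) this ?_
  field_simp
  ring

private lemma contFsc (a b : ℝ) : ContinuousOn (Fsc a b) (Set.Ioo 0 1) := by
  intro y hy
  obtain ⟨h0, h1⟩ := hy
  exact ((hasDerivFsc a b y h0 h1).differentiableAt.continuousAt).continuousWithinAt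

private lemma Fsc_eq (a b y : ℝ) (h0 : 0 < y) (h1 : y < 1) :
    (Real.exp (a * y + b) = y / Real.sqrt (1 - y)) ↔ Fsc a b y = 0 := by
  have h1y : (0:ℝ) < 1 - y := by linarith
  have hs : 0 < Real.sqrt (1 - y) := Real.sqrt_pos.2 h1y
  have hpos : 0 < y / Real.sqrt (1 - y) := div_pos h0 hs
  have hlog : Real.log (y / Real.sqrt (1 - y)) = Real.log y - Real.log (1 - y) / 2 := by
    rw [Real.log_div (ne_of_gt h0) (ne_of_gt hs), Real.log_sqrt h1y.le]
  constructor
  · intro h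
    have := congrArg Real.log h
    rw [Real.log_exp, hlog] at this
    simp only [Fsc]; linarith
  · intro h
    have h2 : a * y + b = Real.log (y / Real.sqrt (1 - y)) := by
      rw [hlog]; simp only [Fsc] at h; linarith
    rw [h2, Real.exp_log hpos]

private lemma antiFsc (a b : ℝ) (s : Set ℝ) (hconv : Convex ℝ s) (hsub : s ⊆ Set.Ioo 0 1)
    (hneg : ∀ y ∈ interior s, a - 1/y - 1/(2*(1-y)) < 0) : StrictAntiOn (Fsc a b) s := by
  apply strictAntiOn_of_deriv_neg hconv ((contFsc a b).mono hsub)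
  intro y hy
  have hmem := hsub (interior_subset hy)
  rw [(hasDerivFsc a b y hmem.1 hmem.2).deriv]
  exact hneg y hy

private lemma monoFsc (a b : ℝ) (s : Set ℝ) (hconv : Convex ℝ s) (hsub : s ⊆ Set.Ioo 0 1)
    (hpos : ∀ y ∈ interior s, 0 < a - 1/y - 1/(2*(1-y))) : StrictMonoOn (Fsc a b) s := by
  apply strictMonoOn_of_deriv_pos hconv ((contFsc a b).mono hsub)
  intro y hy
  have hmem := hsub (interior_subset hy)
  rw [(hasDerivFsc a b y hmem.1 hmem.2).deriv]
  exact hpos y hy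

set_option maxHeartbeats 1000000 in
private lemma mainSC (a s ym yp : ℝ) (ha : (3 + 2 * Real.sqrt 2) / 2 < a)
    (hsdef : s = Real.sqrt (4 * a ^ 2 - 12 * a + 1))
    (hym : ym = (2 * a + 1 - s) / (4 * a)) (hyp : yp = (2 * a + 1 + s) / (4 * a)) :
    0 < ym ∧ ym < yp ∧ yp < 1 ∧
      ∀ b : ℝ,
        ({y ∈ Set.Ioo 0 ym | Real.exp (a * y + b) = y / Real.sqrt (1 - y)}).Subsingleton ∧
        ({y ∈ Set.Ioo ym yp | Real.exp (a * y + b) = y / Real.sqrt (1 - y)}).Subsingleton ∧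
        ({y ∈ Set.Ioo yp 1 | Real.exp (a * y + b) = y / Real.sqrt (1 - y)}).Subsingleton ∧
        ({y ∈ Set.Ioo (0 : ℝ) 1 |
            Real.exp (a * y + b) = y / Real.sqrt (1 - y)}).encard ≤ 3 := by
  have h2 : Real.sqrt 2 ^ 2 = 2 := Real.sq_sqrt (by norm_num)
  have h2one : 1 < Real.sqrt 2 := by nlinarith [Real.sqrt_nonneg 2]
  have ha5 : 5/2 < a := by linarith
  have ha0 : (0:ℝ) < a := by linarith
  have hD : 0 < 4 * a ^ 2 - 12 * a + 1 := by nlinarith [Real.sqrt_nonneg 2]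
  have hs2 : s ^ 2 = 4 * a ^ 2 - 12 * a + 1 := by rw [hsdef]; exact Real.sq_sqrt hD.le
  have hs0 : 0 < s := by rw [hsdef]; exact Real.sqrt_pos.2 hD
  have hslt : s < 2 * a - 1 := by nlinarith
  have h4a : (0:ℝ) < 4 * a := by linarith
  have hym0 : 0 < ym := by rw [hym]; apply div_pos (by linarith) h4a
  have hmp : ym < yp := by rw [hym, hyp, div_lt_div_iff₀ h4a h4a]; nlinarith
  have hyp1 : yp < 1 := by rw [hyp, div_lt_one h4a]; linarith
  have hsum : 2 * a * (ym + yp) = 2 * a + 1 := by rw [hym, hyp]; field_simp; ring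
  have hprod : a * (ym * yp) = 1 := by
    rw [hym, hyp]; field_simp; nlinarith [hs2]
  have hfac : ∀ y : ℝ, 2*a*(y-ym)*(y-yp) = 2*a*y^2 - (2*a+1)*y + 2 := by
    intro y; linear_combination (-y) * hsum + 2 * hprod
  -- sign of the derivative expression
  have hkey : ∀ y : ℝ, 0 < y → y < 1 →
      (a - 1/y - 1/(2*(1-y))) * (2*y*(1-y)) = -(2*a*(y-ym)*(y-yp)) := by
    intro y h0 h1
    rw [hfac y]
    have hy : y ≠ 0 := ne_of_gt h0
    have h1y : (1:ℝ) - y ≠ 0 := by intro h; nlinarith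
    field_simp
    ring
  refine ⟨hym0, hmp, hyp1, fun b => ?_⟩
  have hneg1 : ∀ y ∈ Set.Ioo (0:ℝ) ym, a - 1/y - 1/(2*(1-y)) < 0 := by
    intro y hy
    have h0 : 0 < y := hy.1
    have h1 : y < 1 := by linarith [hy.2]
    have hk := hkey y h0 h1
    nlinarith [mul_pos (show (0:ℝ) < ym - y by linarith [hy.2]) (show (0:ℝ) < yp - y by linarith [hy.2]), mul_pos h0 (show (0:ℝ) < 1 - y by linarith)]
  have hpos2 : ∀ y ∈ Set.Ioo ym yp, 0 < a - 1/y - 1/(2*(1-y)) := by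
    intro y hy
    have h0 : 0 < y := lt_trans hym0 hy.1
    have h1 : y < 1 := lt_trans hy.2 hyp1
    have hk := hkey y h0 h1
    nlinarith [mul_pos (show (0:ℝ) < y - ym by linarith [hy.1]) (show (0:ℝ) < yp - y by linarith [hy.2]), mul_pos h0 (show (0:ℝ) < 1 - y by linarith)]
  have hneg3 : ∀ y ∈ Set.Ioo yp (1:ℝ), a - 1/y - 1/(2*(1-y)) < 0 := by
    intro y hy
    have h0 : 0 < y := lt_trans (lt_trans hym0 hmp) hy.1
    have h1 : y < 1 := hy.2
    have hk := hkey y h0 h1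
    nlinarith [mul_pos (show (0:ℝ) < y - ym by linarith [hy.1, hmp]) (show (0:ℝ) < y - yp by linarith [hy.1]), mul_pos h0 (show (0:ℝ) < 1 - y by linarith)]
  have hsub1 : Set.Ioc (0:ℝ) ym ⊆ Set.Ioo 0 1 := fun y hy => ⟨hy.1, by linarith [hy.2, hmp, hyp1]⟩
  have hsub2 : Set.Icc ym yp ⊆ Set.Ioo (0:ℝ) 1 := fun y hy => ⟨by linarith [hy.1], by linarith [hy.2]⟩
  have hsub3 : Set.Ico yp (1:ℝ) ⊆ Set.Ioo 0 1 := fun y hy => ⟨by linarith [hy.1], hy.2⟩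
  have A1 : StrictAntiOn (Fsc a b) (Set.Ioc 0 ym) := by
    apply antiFsc a b _ (convex_Ioc _ _) hsub1
    rw [interior_Ioc]; exact hneg1
  have A2 : StrictMonoOn (Fsc a b) (Set.Icc ym yp) := by
    apply monoFsc a b _ (convex_Icc _ _) hsub2
    rw [interior_Icc]; exact hpos2
  have A3 : StrictAntiOn (Fsc a b) (Set.Ico yp 1) := by
    apply antiFsc a b _ (convex_Ico _ _) hsub3
    rw [interior_Ico]; exact hneg3
  -- generic subsingleton principle
  have key : ∀ I : Set ℝ, I ⊆ Set.Ioo 0 1 → Set.InjOn (Fsc a b) I →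
      ({y ∈ I | Real.exp (a * y + b) = y / Real.sqrt (1 - y)}).Subsingleton := by
    intro I hI hinj x hx y hy
    have hx1 := hI hx.1
    have hy1 := hI hy.1
    have hfx : Fsc a b x = 0 := (Fsc_eq a b x hx1.1 hx1.2).1 hx.2
    have hfy : Fsc a b y = 0 := (Fsc_eq a b y hy1.1 hy1.2).1 hy.2
    exact hinj hx.1 hy.1 (by rw [hfx, hfy])
  have S1 := key _ (fun y hy => hsub1 ⟨hy.1, hy.2.le⟩) (A1.injOn.mono Set.Ioo_subset_Ioc_self)
  have S2 := key _ (fun y hy => hsub2 ⟨hy.1.le, hy.2.le⟩) (A2.injOn.mono Set.Ioo_subset_Icc_self)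
  have S3 := key _ (fun y hy => hsub3 ⟨hy.1.le, hy.2⟩) (A3.injOn.mono Set.Ioo_subset_Ico_self)
  refine ⟨S1, S2, S3, ?_⟩
  have T1 := key _ hsub1 A1.injOn
  have T2 := key _ hsub2 A2.injOn
  have T3 := key _ hsub3 A3.injOn
  have hcover : ({y ∈ Set.Ioo (0:ℝ) 1 | Real.exp (a * y + b) = y / Real.sqrt (1 - y)}) ⊆
      ({y ∈ Set.Ioc (0:ℝ) ym | Real.exp (a * y + b) = y / Real.sqrt (1 - y)}) ∪
      ({y ∈ Set.Icc ym yp | Real.exp (a * y + b) = y / Real.sqrt (1 - y)}) ∪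
      ({y ∈ Set.Ico yp (1:ℝ) | Real.exp (a * y + b) = y / Real.sqrt (1 - y)}) := by
    intro y hy
    rcases le_total y ym with h | h
    · exact Or.inl (Or.inl ⟨⟨hy.1.1, h⟩, hy.2⟩)
    · rcases le_total y yp with h' | h'
      · exact Or.inl (Or.inr ⟨⟨h, h'⟩, hy.2⟩)
      · exact Or.inr ⟨⟨h', hy.1.2⟩, hy.2⟩
  calc ({y ∈ Set.Ioo (0:ℝ) 1 | Real.exp (a * y + b) = y / Real.sqrt (1 - y)}).encard
      ≤ _ := Set.encard_mono hcover
    _ ≤ _ + _ := Set.encard_union_le _ _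
    _ ≤ (1 + 1) + 1 := by
        gcongr
        · exact le_trans (Set.encard_union_le _ _) (by gcongr <;> [exact Set.encard_le_one_iff.2 (fun x y hx hy => T1 hx hy); exact Set.encard_le_one_iff.2 (fun x y hx hy => T2 hx hy)])
        · exact Set.encard_le_one_iff.2 (fun x y hx hy => T3 hx hy)
    _ ≤ 3 := by norm_num

/-- For `a > (3+2√2)/2`, with `y₋ < y₊` the roots of `4a y² - (4a+2) y + 2`,
the self-consistent equation `e^{ay+b} = y/√(1-y)` has at most one solution in
each of `(0,y₋)`, `(y₋,y₊)`, `(y₊,1)`, hence at most three solutions in `(0,1)`. -/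
theorem selfconsistent_at_most_three (a : ℝ) (ha : (3 + 2 * Real.sqrt 2) / 2 < a) :
    let ym : ℝ := (2 * a + 1 - Real.sqrt (4 * a ^ 2 - 12 * a + 1)) / (4 * a)
    let yp : ℝ := (2 * a + 1 + Real.sqrt (4 * a ^ 2 - 12 * a + 1)) / (4 * a)
    0 < ym ∧ ym < yp ∧ yp < 1 ∧
      ∀ b : ℝ,
        ({y ∈ Set.Ioo 0 ym | Real.exp (a * y + b) = y / Real.sqrt (1 - y)}).Subsingleton ∧
        ({y ∈ Set.Ioo ym yp | Real.exp (a * y + b) = y / Real.sqrt (1 - y)}).Subsingleton ∧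
        ({y ∈ Set.Ioo yp 1 | Real.exp (a * y + b) = y / Real.sqrt (1 - y)}).Subsingleton ∧
        ({y ∈ Set.Ioo (0 : ℝ) 1 |
            Real.exp (a * y + b) = y / Real.sqrt (1 - y)}).encard ≤ 3 :=
  mainSC a _ _ _ ha rfl rfl rfl
end

section
/- For all y ∈ (0,1) and a > 0, the quantity 2 − y − 2a y(1−y) attains value 0 only if a ≥ (3+2√2)/2; equivalently, if 0 < a < (3+2√2)/2 then 2 − y − 2a y(1−y) > 0 for all y ∈ (0,1). -/
open Real

lemma det_key (a y : ℝ) (hy0 : 0 < y) (hy1 : y < 1)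
    (ha : a < (3 + 2 * Real.sqrt 2) / 2) :
    0 < 2 - y - 2 * a * y * (1 - y) := by
  have hs : Real.sqrt 2 ^ 2 = 2 := Real.sq_sqrt (by norm_num)
  have hs0 : (0:ℝ) < Real.sqrt 2 := Real.sqrt_pos.mpr (by norm_num)
  nlinarith [mul_pos hy0 (sub_pos.mpr hy1), sq_nonneg (y - (2 - Real.sqrt 2)),
    mul_pos (mul_pos hy0 (sub_pos.mpr hy1)) (sub_pos.mpr ha),
    mul_nonneg (le_of_lt hs0) (sq_nonneg (y - (2 - Real.sqrt 2)))]

/-- Subcritically (`0 < a < (3+2√2)/2`) the normalized Hessian determinant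
`2 - y - 2ay(1-y)` is strictly positive on `(0,1)`; equivalently it can vanish
only if `a ≥ (3+2√2)/2`. -/
theorem det_positive_subcritical :
    (∀ a : ℝ, 0 < a → a < (3 + 2 * Real.sqrt 2) / 2 →
      ∀ y ∈ Set.Ioo (0 : ℝ) 1, 0 < 2 - y - 2 * a * y * (1 - y)) ∧
    (∀ a : ℝ, 0 < a → ∀ y ∈ Set.Ioo (0 : ℝ) 1,
      2 - y - 2 * a * y * (1 - y) = 0 → (3 + 2 * Real.sqrt 2) / 2 ≤ a) := by
  constructor
  · intro a _ ha y hy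
    exact det_key a y hy.1 hy.2 ha
  · intro a _ y hy h
    by_contra hlt
    push_neg at hlt
    exact absurd h (ne_of_gt (det_key a y hy.1 hy.2 hlt))
end
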